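/- Let Y be a set of non-overlapping closed intervals on {0,...,T-1} with |Y| = M, ε > 0, and let S be an ideal interval scoring matrix for Y. If D ≥ M + 1, then there exist vectors q_0,...,q_{T-1} ∈ ℝ^D and k_0,...,k_{T-1} ∈ ℝ^D such that S(i,j) = ⟨q_i, k_j⟩ for all i,j. -/

import Mathlib

open Matrix

/-- `Y` is a set of non-overlapping closed intervals on `{0, ..., T-1}`:
each interval `(i, j)` satisfies `i < j ≤ T-1`, and any two distinct intervals
`(i₀, j₀)`, `(i₁, j₁)` satisfy `i₀ ≥ j₁` or `i₁ ≥ j₀`. -/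
def NonOverlap (T : ℕ) (Y : Finset (ℕ × ℕ)) : Prop :=
  (∀ p ∈ Y, p.1 < p.2 ∧ p.2 < T) ∧
  (∀ p ∈ Y, ∀ q ∈ Y, p ≠ q → q.2 ≤ p.1 ∨ p.2 ≤ q.1)

theorem ideal_scoring_inner_product_representation (T D : ℕ)
    (Y : Finset (ℕ × ℕ)) (hY : NonOverlap T Y) (ε : ℝ) (hε : 0 < ε)
    (S : Matrix (Fin T) (Fin T) ℝ)
    (hpos : ∀ i j : Fin T, ((i : ℕ), (j : ℕ)) ∈ Y → 0 < S i j)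
    (hneg : ∀ i j : Fin T, ((i : ℕ), (j : ℕ)) ∉ Y → S i j = -ε)
    (hD : Y.card + 1 ≤ D) :
    ∃ q k : Fin T → Fin D → ℝ, ∀ i j : Fin T, S i j = q i ⬝ᵥ k j := by
  classical
  set e := Y.equivFin with he
  have hD0 : 0 < D := by omega
  refine ⟨fun i d => if (d : ℕ) = 0 then -ε else
      if h : (d : ℕ) - 1 < Y.card then
        (fun p : Y => if ((p : ℕ × ℕ)).1 = (i : ℕ)
          then S i ⟨((p : ℕ × ℕ)).2, (hY.1 _ p.prop).2⟩ + ε else 0)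
          (e.symm ⟨(d : ℕ) - 1, h⟩)
      else 0,
    fun j d => if (d : ℕ) = 0 then 1 else
      if h : (d : ℕ) - 1 < Y.card then
        (fun p : Y => if ((p : ℕ × ℕ)).2 = (j : ℕ) then (1 : ℝ) else 0)
          (e.symm ⟨(d : ℕ) - 1, h⟩)
      else 0, ?_⟩
  intro i j
  set z0 : Fin D := ⟨0, hD0⟩ with hz0
  have hz0v : ((z0 : Fin D) : ℕ) = 0 := rfl
  by_cases hmem : ((i : ℕ), (j : ℕ)) ∈ Y
  · set m : Fin Y.card := e ⟨(((i : ℕ), (j : ℕ))), hmem⟩ with hm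
    have hmD : (m : ℕ) + 1 < D := by have := m.2; omega
    set d0 : Fin D := ⟨(m : ℕ) + 1, hmD⟩ with hd0
    have h0 : z0 ≠ d0 := by
      intro h
      have : (0 : ℕ) = (m : ℕ) + 1 := congrArg Fin.val h
      omega
    rw [dotProduct, ← Finset.sum_erase_add _ _ (Finset.mem_univ d0)]
    have herase : ∀ c ∈ Finset.univ.erase d0, c ≠ z0 →
        (if ((c : Fin D) : ℕ) = 0 then -ε else
          if h : ((c : Fin D) : ℕ) - 1 < Y.card then
            (fun p : Y => if ((p : ℕ × ℕ)).1 = (i : ℕ)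
              then S i ⟨((p : ℕ × ℕ)).2, (hY.1 _ p.prop).2⟩ + ε else 0)
              (e.symm ⟨((c : Fin D) : ℕ) - 1, h⟩)
          else 0) *
        (if ((c : Fin D) : ℕ) = 0 then 1 else
          if h : ((c : Fin D) : ℕ) - 1 < Y.card then
            (fun p : Y => if ((p : ℕ × ℕ)).2 = (j : ℕ) then (1 : ℝ) else 0)
              (e.symm ⟨((c : Fin D) : ℕ) - 1, h⟩)
          else 0) = 0 := by
      intro c hc hcz
      have hcd0 : c ≠ d0 := (Finset.mem_erase.1 hc).1
      have hc0' : (c : ℕ) ≠ 0 := fun h => hcz (Fin.ext h)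
      rw [if_neg hc0', if_neg hc0']
      by_cases hcc : (c : ℕ) - 1 < Y.card
      · rw [dif_pos hcc, dif_pos hcc]
        set p := e.symm ⟨(c : ℕ) - 1, hcc⟩ with hp
        by_cases h1 : ((p : ℕ × ℕ)).1 = (i : ℕ)
        · by_cases h2 : ((p : ℕ × ℕ)).2 = (j : ℕ)
          · exfalso
            have hpe : p = ⟨(((i : ℕ), (j : ℕ))), hmem⟩ :=
              Subtype.ext (Prod.ext h1 h2)
            have : (⟨(c : ℕ) - 1, hcc⟩ : Fin Y.card) = m := by
              rw [hm, ← hpe, hp, e.apply_symm_apply]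
            have hcv : (c : ℕ) - 1 = (m : ℕ) := congrArg Fin.val this
            exact hcd0 (Fin.ext (by simp only [hd0]; omega))
          · simp [h2]
        · simp [h1]
      · rw [dif_neg hcc]; ring
    rw [Finset.sum_eq_single_of_mem z0
      (Finset.mem_erase.2 ⟨h0, Finset.mem_univ _⟩) herase]
    have hmc : (m : ℕ) < Y.card := m.2
    have hlt : ((d0 : Fin D) : ℕ) - 1 < Y.card := by
      show (m : ℕ) + 1 - 1 < Y.card; omega
    have hsymm : e.symm ⟨((d0 : Fin D) : ℕ) - 1, hlt⟩ =
        ⟨(((i : ℕ), (j : ℕ))), hmem⟩ := by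
      rw [show (⟨((d0 : Fin D) : ℕ) - 1, hlt⟩ : Fin Y.card) = m by
        apply Fin.ext; simp [hd0]]
      exact e.symm_apply_apply _
    have hd0v : ((d0 : Fin D) : ℕ) ≠ 0 := by simp [hd0]
    beta_reduce
    rw [if_pos hz0v, if_pos hz0v, if_neg hd0v, if_neg hd0v,
      dif_pos hlt, dif_pos hlt, hsymm]
    simp only [if_true]
    have hjj : (⟨(j : ℕ), (hY.1 _ hmem).2⟩ : Fin T) = j := Fin.ext rfl
    rw [hjj]
    ring
  · rw [hneg i j hmem, dotProduct]
    rw [Finset.sum_eq_single_of_mem z0 (Finset.mem_univ _)]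
    · beta_reduce
      rw [if_pos hz0v, if_pos hz0v, mul_one]
    · intro c _ hcz
      have hc0' : (c : ℕ) ≠ 0 := fun h => hcz (Fin.ext h)
      beta_reduce
      rw [if_neg hc0', if_neg hc0']
      by_cases hcc : (c : ℕ) - 1 < Y.card
      · rw [dif_pos hcc, dif_pos hcc]
        set p := e.symm ⟨(c : ℕ) - 1, hcc⟩ with hp
        by_cases h1 : ((p : ℕ × ℕ)).1 = (i : ℕ)
        · by_cases h2 : ((p : ℕ × ℕ)).2 = (j : ℕ)
          · have hpe : ((p : ℕ × ℕ)) = (((i : ℕ), (j : ℕ))) := Prod.ext h1 h2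
            exact absurd (hpe ▸ p.prop) hmem
          · simp [h2]
        · simp [h1]
      · rw [dif_neg hcc]; ring
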